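/- Every unit dual quaternion encodes a rigid body transformation: let x = a + ε • b be a dual quaternion with quaternion parts a, b satisfying star x * x = 1 (equivalently, star a * a = 1 and star a * b + star b * a = 0). Then the quaternion p := 2 • (b * star a) is pure (its real part is zero), and x = a + ε • ((1/2) • (p * a)); i.e. x has the form of equation (2) with rotation quaternion a (of norm 1) and translation p. -/

import Mathlib

open Quaternion

/-- Componentwise star (quaternion conjugation on primary and dual parts)
on the dual quaternions `DualNumber ℍ[ℝ]`. -/
noncomputable instance : Star (DualNumber ℍ[ℝ]) :=
  ⟨fun x => TrivSqZeroExt.inl (star x.fst) + TrivSqZeroExt.inr (star x.snd)⟩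

@[simp] theorem DualQuaternion.fst_star (x : DualNumber ℍ[ℝ]) :
    (star x).fst = star x.fst := by
  show (TrivSqZeroExt.inl (star x.fst) + TrivSqZeroExt.inr (star x.snd)).fst = _
  simp

@[simp] theorem DualQuaternion.snd_star (x : DualNumber ℍ[ℝ]) :
    (star x).snd = star x.snd := by
  show (TrivSqZeroExt.inl (star x.fst) + TrivSqZeroExt.inr (star x.snd)).snd = _
  simp

noncomputable instance : StarRing (DualNumber ℍ[ℝ]) where
  star_involutive x := TrivSqZeroExt.ext (by simp) (by simp)
  star_mul x y := TrivSqZeroExt.ext (by simp [TrivSqZeroExt.fst_mul])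
    (by
      simp [TrivSqZeroExt.snd_mul, MulOpposite.smul_eq_mul_unop, smul_eq_mul]
      abel)
  star_add x y := TrivSqZeroExt.ext (by simp) (by simp)
/-- **Every unit dual quaternion encodes a rigid body transformation.**  If
`x = a + ε b` satisfies `star x * x = 1`, then `p := 2 • (b * star a)` is a pure
quaternion and `x = a + ε ((1/2) p a)`, i.e. `x` has rotation quaternion `a`
and translation `p`. -/
theorem unit_dual_quaternion_decomposition (x : DualNumber ℍ[ℝ]) (a b : ℍ[ℝ])
    (hab : x = TrivSqZeroExt.inl a + TrivSqZeroExt.inr b)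
    (hx : star x * x = 1) :
    ((2 : ℝ) • (b * star a)).re = 0 ∧
    x = TrivSqZeroExt.inl a +
      TrivSqZeroExt.inr ((1 / 2 : ℝ) • (((2 : ℝ) • (b * star a)) * a)) := by
  subst hab
  have h1 := congrArg TrivSqZeroExt.fst hx
  have h2 := congrArg TrivSqZeroExt.snd hx
  simp [TrivSqZeroExt.fst_mul, TrivSqZeroExt.snd_mul, MulOpposite.smul_eq_mul_unop, smul_eq_mul] at h1 h2
  have h3 := congrArg QuaternionAlgebra.re h2
  simp only [Quaternion.re_add, Quaternion.re_mul, Quaternion.re_star, Quaternion.imI_star,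
    Quaternion.imJ_star, Quaternion.imK_star, Quaternion.re_zero] at h3
  constructor
  · simp only [Quaternion.re_smul, Quaternion.re_mul, Quaternion.re_star, Quaternion.imI_star,
      Quaternion.imJ_star, Quaternion.imK_star, smul_eq_mul]
    linarith
  · congr 1
    rw [smul_mul_assoc, smul_smul, mul_assoc, h1, mul_one]
    norm_num
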